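/- Let π be a probability measure on [0,1] that is stationary for the Wright-Fisher generator L̂f(z) = [Bb₁(1-z) - Bb₀z + Sz(1-z)]f'(z) + (1/2)z(1-z)f''(z) (i.e. ∫ L̂f dπ = 0 for all f ∈ C²([0,1])), and write E[0^m] = ∫(1-z)^m dπ. Then for every n ≥ 0: (n+1+2B+2S)·E[0^{n+2}] = (n+1+2Bb₀)·E[0^{n+1}] + 2S·E[0^{n+3}], where B = Bb₀ + Bb₁. -/

import Mathlib

open MeasureTheory Real

/-- First moment recursion for a stationary distribution of the Wright-Fisher
diffusion with mutation rates `B*b₀`, `B*b₁` and selection coefficient `S`: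
`(n+1+2B+2S)·E[0^{n+2}] = (n+1+2Bb₀)·E[0^{n+1}] + 2S·E[0^{n+3}]`. -/
theorem WF_moment_recursion_one (B b₀ b₁ S : ℝ) (hB : 0 ≤ B) (hS : 0 ≤ S)
    (hb₀ : 0 ≤ b₀) (hb₁ : 0 ≤ b₁) (hsum : b₀ + b₁ = 1)
    (μ : Measure ℝ) [IsProbabilityMeasure μ] (hsupp : μ (Set.Icc (0 : ℝ) 1)ᶜ = 0)
    (hstat : ∀ f : ℝ → ℝ, ContDiff ℝ 2 f →
      ∫ z, ((B * b₁ * (1 - z) - B * b₀ * z + S * z * (1 - z)) * deriv f z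
          + 1 / 2 * (z * (1 - z)) * deriv (deriv f) z) ∂μ = 0)
    (n : ℕ) :
    ((n : ℝ) + 1 + 2 * B + 2 * S) * ∫ z, (1 - z) ^ (n + 2) ∂μ
      = ((n : ℝ) + 1 + 2 * B * b₀) * ∫ z, (1 - z) ^ (n + 1) ∂μ
        + 2 * S * ∫ z, (1 - z) ^ (n + 3) ∂μ := by
  -- the measure lives on [0,1]
  have hres : μ.restrict (Set.Icc (0 : ℝ) 1) = μ := by
    apply Measure.restrict_eq_self_of_ae_mem
    rw [Filter.eventually_iff, mem_ae_iff]
    convert hsupp using 2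
    rfl
  have Ik : ∀ k : ℕ, Integrable (fun z : ℝ => (1 - z) ^ k) μ := by
    intro k
    rw [← hres]
    exact ((continuous_const.sub continuous_id).pow k).continuousOn.integrableOn_compact
      isCompact_Icc
  -- derivatives of the test function f z = (1-z)^(n+2)
  have hd1 : ∀ z : ℝ, HasDerivAt (fun z : ℝ => (1 - z) ^ (n + 2))
      (-((n : ℝ) + 2) * (1 - z) ^ (n + 1)) z := by
    intro z
    have h := ((hasDerivAt_id z).const_sub 1).pow (n + 2)
    simp only [id_eq, Pi.pow_def] at h
    refine h.congr_deriv ?_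
    push_cast; ring
  have hd1' : deriv (fun z : ℝ => (1 - z) ^ (n + 2))
      = fun z => -((n : ℝ) + 2) * (1 - z) ^ (n + 1) :=
    funext fun z => (hd1 z).deriv
  have hd2 : ∀ z : ℝ, HasDerivAt (fun z : ℝ => -((n : ℝ) + 2) * (1 - z) ^ (n + 1))
      (((n : ℝ) + 2) * ((n : ℝ) + 1) * (1 - z) ^ n) z := by
    intro z
    have h := (((hasDerivAt_id z).const_sub 1).pow (n + 1)).const_mul (-((n : ℝ) + 2))
    simp only [id_eq, Pi.pow_def] at h
    refine h.congr_deriv ?_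
    push_cast; ring
  have hd2' : deriv (deriv (fun z : ℝ => (1 - z) ^ (n + 2)))
      = fun z => ((n : ℝ) + 2) * ((n : ℝ) + 1) * (1 - z) ^ n := by
    rw [hd1']
    exact funext fun z => (hd2 z).deriv
  have hcd : ContDiff ℝ 2 (fun z : ℝ => (1 - z) ^ (n + 2)) :=
    (contDiff_const.sub contDiff_id).pow (n + 2)
  have key := hstat (fun z : ℝ => (1 - z) ^ (n + 2)) hcd
  rw [hd2', hd1'] at key
  -- coefficients
  set a1 : ℝ := ((n : ℝ) + 2) * (B * b₀ + ((n : ℝ) + 1) / 2) with ha1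
  set a2 : ℝ := -(((n : ℝ) + 2) * (B + S + ((n : ℝ) + 1) / 2)) with ha2
  set a3 : ℝ := ((n : ℝ) + 2) * S with ha3
  have hrw : (∫ z, ((B * b₁ * (1 - z) - B * b₀ * z + S * z * (1 - z)) *
        (-((n : ℝ) + 2) * (1 - z) ^ (n + 1))
        + 1 / 2 * (z * (1 - z)) * (((n : ℝ) + 2) * ((n : ℝ) + 1) * (1 - z) ^ n)) ∂μ)
      = a1 * (∫ z, (1 - z) ^ (n + 1) ∂μ) + a2 * (∫ z, (1 - z) ^ (n + 2) ∂μ)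
        + a3 * (∫ z, (1 - z) ^ (n + 3) ∂μ) := by
    have h1 := (Ik (n + 1)).const_mul a1
    have h2 := (Ik (n + 2)).const_mul a2
    have h3 := (Ik (n + 3)).const_mul a3
    have h12 : Integrable (fun z : ℝ => a1 * (1 - z) ^ (n + 1) + a2 * (1 - z) ^ (n + 2)) μ :=
      h1.add h2
    have hsplit : (∫ z, (a1 * (1 - z) ^ (n + 1) + a2 * (1 - z) ^ (n + 2)
          + a3 * (1 - z) ^ (n + 3)) ∂μ)
        = a1 * (∫ z, (1 - z) ^ (n + 1) ∂μ) + a2 * (∫ z, (1 - z) ^ (n + 2) ∂μ)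
          + a3 * (∫ z, (1 - z) ^ (n + 3) ∂μ) := by
      rw [integral_add h12 h3, integral_add h1 h2, integral_const_mul,
        integral_const_mul, integral_const_mul]
    rw [← hsplit]
    apply integral_congr_ae
    filter_upwards with z
    have hb : b₁ = 1 - b₀ := by linarith
    rw [ha1, ha2, ha3, hb]
    ring
  rw [hrw] at key
  rw [ha1, ha2, ha3] at key
  have hn2 : ((n : ℝ) + 2) ≠ 0 := by positivity
  refine mul_left_cancel₀ hn2 ?_
  linear_combination (-2 : ℝ) * key
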